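/- Let H be a Hopf algebra over a field k, let e : H → H ⊗ H be the quantum V-bein e(h) = Σ S(h₍₁₎) ⊗ h₍₂₎, and let A : H → H ⊗ H be the gauge field A(h) = Σ S(h₍₁₎) ⊗ h₍₂₎ − ε(h) 1 ⊗ 1. Then A has zero torsion with respect to e: for every v ∈ ker ε, d(e(v)) + Σ A(v₍₁₎) ∧ e(v₍₂₎) − A(v) ∧ (1 ⊗ 1) = 0 in H ⊗ H ⊗ H. -/

import Mathlib

set_option synthInstance.maxHeartbeats 800000
set_option maxHeartbeats 1600000


open TensorProduct

noncomputable section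

variable {k H : Type*} [Field k] [Ring H] [HopfAlgebra k H]

/-- The exterior differential on universal 1-forms:
`d(a ⊗ b) = 1 ⊗ a ⊗ b − a ⊗ 1 ⊗ b + a ⊗ b ⊗ 1`. -/
noncomputable def dOne : H ⊗[k] H →ₗ[k] H ⊗[k] (H ⊗[k] H) :=
  TensorProduct.mk k H (H ⊗[k] H) 1
    - LinearMap.lTensor H (TensorProduct.mk k H H 1)
    + LinearMap.lTensor H ((TensorProduct.mk k H H).flip 1)

/-- The wedge product of universal 1-forms: `(a ⊗ b) ∧ (c ⊗ d) = a ⊗ bc ⊗ d`. -/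
noncomputable def wedge :
    (H ⊗[k] H) ⊗[k] (H ⊗[k] H) →ₗ[k] H ⊗[k] (H ⊗[k] H) :=
  LinearMap.lTensor H
      ((LinearMap.mul' k H).rTensor H ∘ₗ (TensorProduct.assoc k H H H).symm.toLinearMap)
    ∘ₗ (TensorProduct.assoc k H H (H ⊗[k] H)).toLinearMap

/-- The quantum `V`-bein `e(h) = Σ S(h₍₁₎) ⊗ h₍₂₎`. -/
noncomputable def vbein : H →ₗ[k] H ⊗[k] H :=
  (HopfAlgebra.antipode (R := k) (A := H)).rTensor H ∘ₗ Coalgebra.comul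

/-- The gauge field `A(h) = Σ S(h₍₁₎) ⊗ h₍₂₎ − ε(h) 1 ⊗ 1`. -/
noncomputable def gaugeA : H →ₗ[k] H ⊗[k] H :=
  vbein - (Coalgebra.counit (R := k) (A := H)).smulRight ((1 : H) ⊗ₜ[k] (1 : H))

open Coalgebra

lemma wedge_tmul (a b c d : H) :
    wedge (k := k) ((a ⊗ₜ[k] b) ⊗ₜ[k] (c ⊗ₜ[k] d)) = a ⊗ₜ[k] ((b * c) ⊗ₜ[k] d) := by
  simp [wedge, LinearMap.mul'_apply]

lemma dOne_tmul (a b : H) :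
    dOne (k := k) (a ⊗ₜ[k] b)
      = (1 : H) ⊗ₜ[k] (a ⊗ₜ[k] b) - a ⊗ₜ[k] ((1 : H) ⊗ₜ[k] b) + a ⊗ₜ[k] (b ⊗ₜ[k] (1 : H)) := by
  simp [dOne]

lemma wedge_one_one (z : H ⊗[k] H) :
    wedge (((1 : H) ⊗ₜ[k] (1 : H)) ⊗ₜ[k] z) = (1 : H) ⊗ₜ[k] z := by
  induction z using TensorProduct.induction_on with
  | zero => simp
  | tmul c d => simp [wedge_tmul]
  | add u w hu hw => rw [tmul_add, map_add, hu, hw, tmul_add]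

local notation "𝒮" => HopfAlgebra.antipode (R := k) (A := H)

lemma vbein_repr {x : H} {ι : Type*} (r : Coalgebra.Repr k x ι) :
    vbein (k := k) x = ∑ i ∈ r.index, 𝒮 (r.left i) ⊗ₜ[k] r.right i := by
  rw [vbein, LinearMap.comp_apply, ← r.eq, map_sum]
  simp

lemma claim2 (x : H) :
    TensorProduct.map 𝒮 (LinearMap.mul' k H ∘ₗ LinearMap.lTensor H 𝒮)
        ((LinearMap.lTensor H (comul (R := k))) (comul (R := k) x))
      = 𝒮 x ⊗ₜ[k] (1 : H) := by
  have h1 : ∀ u : H ⊗[k] H,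
      TensorProduct.map 𝒮 (LinearMap.mul' k H ∘ₗ LinearMap.lTensor H 𝒮)
          ((LinearMap.lTensor H (comul (R := k))) u)
        = TensorProduct.map 𝒮 (Algebra.linearMap k H ∘ₗ counit (R := k))
            u := by
    intro u
    induction u using TensorProduct.induction_on with
    | zero => simp
    | tmul a b =>
        simp only [LinearMap.lTensor_tmul, TensorProduct.map_tmul, LinearMap.comp_apply]
        rw [HopfAlgebra.mul_antipode_lTensor_comul_apply]
        rfl
    | add u w hu hw => simp only [map_add, hu, hw]
  rw [h1, ← LinearMap.map_comp_lTensor, LinearMap.comp_apply, lTensor_counit_comul]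
  simp

lemma expand (a b : H) {ι : Type*} (ra : Coalgebra.Repr k a ι) :
    TensorProduct.map 𝒮 (LinearMap.mul' k H ∘ₗ LinearMap.lTensor H 𝒮)
        ((TensorProduct.assoc k H H H) ((comul (R := k) a) ⊗ₜ[k] b))
      = ∑ m ∈ ra.index, 𝒮 (ra.left m) ⊗ₜ[k] (ra.right m * 𝒮 b) := by
  rw [← ra.eq, TensorProduct.sum_tmul, map_sum, map_sum]
  simp [LinearMap.mul'_apply]

lemma claim1 (x y : H) :
    wedge ((TensorProduct.map (vbein (k := k)) (LinearMap.rTensor H 𝒮))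
        ((TensorProduct.assoc k H H H) ((comul (R := k) x) ⊗ₜ[k] y)))
      = 𝒮 x ⊗ₜ[k] ((1 : H) ⊗ₜ[k] y) := by
  set rx := Coalgebra.Repr.arbitrary k x with hrx
  have key : (∑ j ∈ rx.index, ∑ m ∈ (Coalgebra.Repr.arbitrary k (rx.left j)).index,
      𝒮 ((Coalgebra.Repr.arbitrary k (rx.left j)).left m) ⊗ₜ[k]
        ((Coalgebra.Repr.arbitrary k (rx.left j)).right m * 𝒮 (rx.right j)))
      = 𝒮 x ⊗ₜ[k] (1 : H) := by
    have hc := claim2 (k := k) (H := H) x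
    rw [← Coalgebra.coassoc_apply, ← rx.eq, map_sum, map_sum, map_sum] at hc
    rw [← hc]
    refine Finset.sum_congr rfl fun j _ => ?_
    rw [LinearMap.rTensor_tmul]
    exact (expand _ _ (Coalgebra.Repr.arbitrary k (rx.left j))).symm
  set L : H ⊗[k] H →ₗ[k] H ⊗[k] (H ⊗[k] H) :=
    (TensorProduct.assoc k H H H).toLinearMap ∘ₗ (TensorProduct.mk k (H ⊗[k] H) H).flip y
    with hL
  have key2 := congrArg L key
  simp only [map_sum, hL, LinearMap.comp_apply, LinearMap.flip_apply,
    TensorProduct.mk_apply, LinearEquiv.coe_coe, TensorProduct.assoc_tmul] at key2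
  rw [← rx.eq, TensorProduct.sum_tmul, map_sum, map_sum, map_sum]
  rw [← key2]
  refine Finset.sum_congr rfl fun j _ => ?_
  rw [TensorProduct.assoc_tmul, TensorProduct.map_tmul, LinearMap.rTensor_tmul,
    vbein_repr (Coalgebra.Repr.arbitrary k (rx.left j)), TensorProduct.sum_tmul, map_sum]
  exact Finset.sum_congr rfl fun m _ => wedge_tmul _ _ _ _


/-- the gauge field `A` has zero torsion with respect to the quantum `V`-bein
`e`: for every `v ∈ ker ε`, `d(e(v)) + Σ A(v₍₁₎) ∧ e(v₍₂₎) − A(v) ∧ (1 ⊗ 1) = 0`. -/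
theorem statement7 :
    ∀ v : H, Coalgebra.counit (R := k) v = 0 →
      dOne (vbein (k := k) (H := H) v)
          + wedge ((TensorProduct.map gaugeA vbein) (Coalgebra.comul (R := k) v))
          - wedge ((gaugeA (k := k) (H := H) v) ⊗ₜ[k] ((1 : H) ⊗ₜ[k] (1 : H)))
        = 0 := by
  intro v hv
  set r := Coalgebra.Repr.arbitrary k v with hr
  have hvb : vbein (k := k) v = ∑ i ∈ r.index, 𝒮 (r.left i) ⊗ₜ[k] r.right i := vbein_repr r
  have hg : ∀ x : H, gaugeA (k := k) x
      = vbein (k := k) x - counit (R := k) x • ((1 : H) ⊗ₜ[k] (1 : H)) := by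
    intro x; simp [gaugeA]
  have hgA : gaugeA (k := k) v = vbein (k := k) v := by rw [hg, hv, zero_smul, sub_zero]
  -- Term 1
  have T1 : dOne (vbein (k := k) v)
      = ∑ i ∈ r.index,
          ((1 : H) ⊗ₜ[k] (𝒮 (r.left i) ⊗ₜ[k] r.right i)
            - 𝒮 (r.left i) ⊗ₜ[k] ((1 : H) ⊗ₜ[k] r.right i)
            + 𝒮 (r.left i) ⊗ₜ[k] (r.right i ⊗ₜ[k] (1 : H))) := by
    rw [hvb, map_sum]
    exact Finset.sum_congr rfl fun i _ => dOne_tmul _ _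
  -- Piece A
  have hA : ∑ i ∈ r.index, wedge ((vbein (k := k) (r.left i)) ⊗ₜ[k] (vbein (k := k) (r.right i)))
      = ∑ i ∈ r.index, 𝒮 (r.left i) ⊗ₜ[k] ((1 : H) ⊗ₜ[k] r.right i) := by
    have e1 : ∀ i : r.ι, wedge ((vbein (k := k) (r.left i)) ⊗ₜ[k] (vbein (k := k) (r.right i)))
        = wedge ((TensorProduct.map (vbein (k := k)) (LinearMap.rTensor H 𝒮))
            ((LinearMap.lTensor H (comul (R := k))) (r.left i ⊗ₜ[k] r.right i))) := by
      intro i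
      rw [LinearMap.lTensor_tmul, TensorProduct.map_tmul]
      rfl
    calc ∑ i ∈ r.index, wedge ((vbein (k := k) (r.left i)) ⊗ₜ[k] (vbein (k := k) (r.right i)))
        = wedge ((TensorProduct.map (vbein (k := k)) (LinearMap.rTensor H 𝒮))
            ((LinearMap.lTensor H (comul (R := k))) (comul (R := k) v))) := by
          rw [← r.eq, map_sum, map_sum, map_sum]
          exact Finset.sum_congr rfl fun i _ => e1 i
      _ = wedge ((TensorProduct.map (vbein (k := k)) (LinearMap.rTensor H 𝒮))
            ((TensorProduct.assoc k H H H)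
              ((comul (R := k) (A := H)).rTensor H (comul (R := k) v)))) := by
          rw [Coalgebra.coassoc_apply]
      _ = ∑ i ∈ r.index, wedge ((TensorProduct.map (vbein (k := k)) (LinearMap.rTensor H 𝒮))
            ((TensorProduct.assoc k H H H) ((comul (R := k) (r.left i)) ⊗ₜ[k] r.right i))) := by
          rw [← r.eq, map_sum, map_sum, map_sum, map_sum]
          exact Finset.sum_congr rfl fun i _ => by rw [LinearMap.rTensor_tmul]
      _ = ∑ i ∈ r.index, 𝒮 (r.left i) ⊗ₜ[k] ((1 : H) ⊗ₜ[k] r.right i) :=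
          Finset.sum_congr rfl fun i _ => claim1 _ _
  -- Piece B
  have hv2 : ∑ i ∈ r.index, counit (R := k) (r.left i) • r.right i = v := by
    have h := Coalgebra.sum_counit_tmul_eq r
    have h2 := congrArg (TensorProduct.lid k H) h
    simp only [map_sum, TensorProduct.lid_tmul, one_smul] at h2
    exact h2
  have hB : ∑ i ∈ r.index, counit (R := k) (r.left i) • ((1 : H) ⊗ₜ[k] vbein (k := k) (r.right i))
      = (1 : H) ⊗ₜ[k] vbein (k := k) v := by
    calc ∑ i ∈ r.index, counit (R := k) (r.left i) • ((1 : H) ⊗ₜ[k] vbein (k := k) (r.right i))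
        = (1 : H) ⊗ₜ[k] (vbein (k := k) (∑ i ∈ r.index, counit (R := k) (r.left i) • r.right i)) := by
          rw [map_sum, tmul_sum]
          exact Finset.sum_congr rfl fun i _ => by rw [map_smul, tmul_smul]
      _ = (1 : H) ⊗ₜ[k] vbein (k := k) v := by rw [hv2]
  -- Term 2
  have T2 : wedge ((TensorProduct.map gaugeA (vbein (k := k))) (comul (R := k) v))
      = (∑ i ∈ r.index, 𝒮 (r.left i) ⊗ₜ[k] ((1 : H) ⊗ₜ[k] r.right i))
        - (1 : H) ⊗ₜ[k] vbein (k := k) v := by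
    rw [← r.eq, map_sum, map_sum]
    have step : ∀ i ∈ r.index, wedge ((TensorProduct.map gaugeA (vbein (k := k)))
          (r.left i ⊗ₜ[k] r.right i))
        = wedge ((vbein (k := k) (r.left i)) ⊗ₜ[k] (vbein (k := k) (r.right i)))
          - counit (R := k) (r.left i) • ((1 : H) ⊗ₜ[k] vbein (k := k) (r.right i)) := by
      intro i _
      rw [TensorProduct.map_tmul, hg, sub_tmul, ← smul_tmul', map_sub, map_smul, wedge_one_one]
    rw [Finset.sum_congr rfl step, Finset.sum_sub_distrib, hA, hB]
  -- Term 3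
  have T3 : wedge ((gaugeA (k := k) (H := H) v) ⊗ₜ[k] ((1 : H) ⊗ₜ[k] (1 : H)))
      = ∑ i ∈ r.index, 𝒮 (r.left i) ⊗ₜ[k] (r.right i ⊗ₜ[k] (1 : H)) := by
    rw [hgA, hvb, TensorProduct.sum_tmul, map_sum]
    exact Finset.sum_congr rfl fun i _ => by rw [wedge_tmul, mul_one]
  rw [T1, T2, T3, hvb, tmul_sum, ← Finset.sum_sub_distrib, ← Finset.sum_add_distrib,
    ← Finset.sum_sub_distrib]
  exact Finset.sum_eq_zero fun i _ => by abel
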